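/- arXiv:1409.3801 — 4 statements merged into one kernel-verified Lean document; each statement's English description precedes it below -/
import Mathlib

section
/- Let d, g, l, m, a, b be integers with d ≥ 1, l ≥ 1, g ≥ 0, 1 ≤ a ≤ b, and m ≥ 1. If d·m = a·b and 2g − 2 + l·(m−1) = d·(a+b−4), then l·a < 2·d² + l·d (equivalently, a < 2d²/l + d). -/
/-- Key bound in the case `l > 0` of the proof of Proposition 1.2:
`a < 2d²/l + d`, in the integral form `l·a < 2·d² + l·d`. -/
theorem stmt_3 (d g l m a b : ℤ) (hd : 1 ≤ d) (hl : 1 ≤ l) (hg : 0 ≤ g)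
    (ha : 1 ≤ a) (hab : a ≤ b) (hm : 1 ≤ m)
    (h1 : d * m = a * b)
    (h2 : 2 * g - 2 + l * (m - 1) = d * (a + b - 4)) :
    l * a < 2 * d ^ 2 + l * d := by
  by_contra h
  push_neg at h
  -- h : 2 * d ^ 2 + l * d ≤ l * a
  have h3 : l * (m - 1) ≤ d * (a + b - 4) + 2 := by linarith
  have ha0 : (0:ℤ) ≤ a := by linarith
  have h4 : a * (l * (m - 1)) ≤ a * (d * (a + b - 4) + 2) :=
    mul_le_mul_of_nonneg_left h3 ha0
  have h5 : a * a ≤ d * m := by nlinarith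
  -- from h4 and h1: m * (a*l - d^2) ≤ d*a^2 - 4*d*a + 2*a + a*l
  have h6 : m * (a * l - d ^ 2) ≤ d * a ^ 2 - 4 * d * a + 2 * a + a * l := by
    nlinarith [h4, h1]
  have hpos : 0 < a * l - d ^ 2 := by nlinarith
  have h7 : a * a * (a * l - d ^ 2) ≤ d * m * (a * l - d ^ 2) :=
    mul_le_mul_of_nonneg_right h5 (le_of_lt hpos)
  have h8 : d * (m * (a * l - d ^ 2)) ≤ d * (d * a ^ 2 - 4 * d * a + 2 * a + a * l) :=
    mul_le_mul_of_nonneg_left h6 (by linarith)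
  -- combine: a^2*(a*l - d^2) ≤ d^2*a^2 - 4*d^2*a + 2*d*a + d*a*l
  have h9 : a * (l * a * (a - d)) ≤ a * (2 * d ^ 2 * a - 4 * d ^ 2 + 2 * d) := by nlinarith [h7, h8]
  have h10 : l * a * (a - d) ≤ 2 * d ^ 2 * a - 4 * d ^ 2 + 2 * d := by
    have := (mul_le_mul_iff_right₀ (by linarith : (0:ℤ) < a)).mp h9
    linarith
  have h11 : 2 * d ^ 2 ≤ l * (a - d) := by linarith
  nlinarith [h10, h11, mul_le_mul_of_nonneg_right h11 (le_of_lt (by nlinarith : (0:ℤ) < a))]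
end

section
/- Let l, m, a, b be integers with 1 ≤ l ≤ 7, 1 ≤ a ≤ b, m ≥ 1, 4·m = a·b, and −2 + l·(m−1) = 4·(a+b−4). Then (l, a, b, m) is one of the following fifteen quadruples: (7,3,4,3), (6,3,8,6), (6,4,4,4), (5,4,7,7), (3,6,26,39), (2,13,16,52), (2,12,18,54), (2,10,28,70), (2,9,48,108), (1,28,33,231), (1,22,50,275), (1,20,67,335), (1,19,84,399), (1,18,118,531), (1,17,220,935). -/
set_option maxHeartbeats 0 in
/-- Numerical content of Lemma 1.3: the fifteen possible types `(l, a, b, m)`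
for a smooth rational quartic to be a primitive s.t.c.i. -/
theorem stmt_6 (l m a b : ℤ) (hl1 : 1 ≤ l) (hl7 : l ≤ 7)
    (ha : 1 ≤ a) (hab : a ≤ b) (hm : 1 ≤ m)
    (h1 : 4 * m = a * b)
    (h2 : -2 + l * (m - 1) = 4 * (a + b - 4)) :
    (l, a, b, m) = (7, 3, 4, 3) ∨
    (l, a, b, m) = (6, 3, 8, 6) ∨
    (l, a, b, m) = (6, 4, 4, 4) ∨
    (l, a, b, m) = (5, 4, 7, 7) ∨
    (l, a, b, m) = (3, 6, 26, 39) ∨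
    (l, a, b, m) = (2, 13, 16, 52) ∨
    (l, a, b, m) = (2, 12, 18, 54) ∨
    (l, a, b, m) = (2, 10, 28, 70) ∨
    (l, a, b, m) = (2, 9, 48, 108) ∨
    (l, a, b, m) = (1, 28, 33, 231) ∨
    (l, a, b, m) = (1, 22, 50, 275) ∨
    (l, a, b, m) = (1, 20, 67, 335) ∨
    (l, a, b, m) = (1, 19, 84, 399) ∨
    (l, a, b, m) = (1, 18, 118, 531) ∨
    (l, a, b, m) = (1, 17, 220, 935) := by
  have hb : 1 ≤ b := le_trans ha hab
  have key : l * (a * b) = 16 * a + 16 * b + 4 * l - 56 := by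
    linear_combination 4 * h2 - l * h1
  have ha31 : l * a ≤ 31 := by
    nlinarith [mul_pos (by linarith : (0:ℤ) < l) (by linarith : (0:ℤ) < b)]
  have ha31' : a ≤ 31 := by nlinarith
  simp only [Prod.mk.injEq]
  interval_cases l <;> interval_cases a <;>
    first
      | (exfalso; omega)
      | (norm_num; omega)
end

section
/- Let α, k, n, l, b, d, A be positive integers with l·b > d², α·k = A + l, (n+1)·(l·b − d²) = α·b·k², and 3·α·n·(n+2) ≤ 2·b·(b−1)²·(n+1). Then 3·(A + l)·(b·A + d²) < 2·b·(l·b − d²)·(b−1)². -/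
/-- Derivation of condition (4) of Proposition 3.3 (condition (5) of Theorem 3.4):
`3·(A + l)·(b·A + d²) < 2·b·(l·b − d²)·(b−1)²`. -/
theorem stmt_10 (α k n l b d A : ℤ)
    (hα : 0 < α) (hk : 0 < k) (hn : 0 < n) (hl : 0 < l) (hb : 0 < b)
    (hd : 0 < d) (hA : 0 < A)
    (hlb : l * b > d ^ 2)
    (h1 : α * k = A + l)
    (h2 : (n + 1) * (l * b - d ^ 2) = α * b * k ^ 2)
    (h3 : 3 * (α * n * (n + 2)) ≤ 2 * b * (b - 1) ^ 2 * (n + 1)) :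
    3 * (A + l) * (b * A + d ^ 2) < 2 * b * (l * b - d ^ 2) * (b - 1) ^ 2 := by
  have hD : 0 < l * b - d ^ 2 := by linarith
  have key : (n + 1) * (n + 1 - k) < n * (n + 2) := by nlinarith [mul_pos hk (by linarith : (0:ℤ) < n + 1)]
  have habk : 0 < α * b * k ^ 2 := by positivity
  -- h4 : 3αn(n+2)·(αbk²) ≤ 2bD(b-1)²(n+1)²
  have h4 : 3 * (α * n * (n + 2)) * (α * b * k ^ 2) ≤
      2 * b * (l * b - d ^ 2) * (b - 1) ^ 2 * (n + 1) ^ 2 := by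
    have := mul_le_mul_of_nonneg_right h3 (le_of_lt (mul_pos (by linarith : (0:ℤ) < n+1) hD))
    calc 3 * (α * n * (n + 2)) * (α * b * k ^ 2)
        = 3 * (α * n * (n + 2)) * ((n + 1) * (l * b - d ^ 2)) := by rw [h2]
      _ ≤ 2 * b * (b - 1) ^ 2 * (n + 1) * ((n + 1) * (l * b - d ^ 2)) := this
      _ = 2 * b * (l * b - d ^ 2) * (b - 1) ^ 2 * (n + 1) ^ 2 := by ring
  -- h5 : LHS·(n+1)² < 3αn(n+2)·(αbk²)
  have h5 : 3 * (A + l) * (b * A + d ^ 2) * (n + 1) ^ 2 <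
      3 * (α * n * (n + 2)) * (α * b * k ^ 2) := by
    have hA' : A = α * k - l := by linarith
    have e : 3 * (A + l) * (b * A + d ^ 2) * (n + 1) ^ 2
        = 3 * α * k * (α * b * k * (n+1)^2) - 3 * α * k * ((l*b - d^2) * (n+1)^2) := by
      rw [hA']; ring
    have e2 : (l*b - d^2) * (n+1)^2 = α * b * k^2 * (n+1) := by
      linear_combination (n + 1) * h2
    rw [e, e2]
    have : 3 * α * k * (α * b * k * (n+1)^2) - 3 * α * k * (α * b * k^2 * (n+1))
        = 3 * (α^2 * b * k^2) * ((n+1)*(n+1-k)) := by ring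
    rw [this]
    have : 3 * (α * n * (n + 2)) * (α * b * k ^ 2) = 3 * (α^2*b*k^2) * (n*(n+2)) := by ring
    rw [this]
    exact mul_lt_mul_of_pos_left key (by positivity : (0:ℤ) < 3 * (α^2*b*k^2))
  have hfin := lt_of_lt_of_le h5 h4
  exact lt_of_mul_lt_mul_right hfin (by positivity : (0:ℤ) ≤ (n + 1) ^ 2)
end

section
/- Let d ≥ 3 and g ≥ 0 be integers with 4·g ≤ (d−2)². Then there exist positive integers a, b, l, m, α, n, k with a ≤ b such that, setting A := d·(b−4) − 2·g + 2, the following five conditions all hold: (1) m·d = a·b; (2) 2g − 2 + l·(m−1) = d·(a + b − 4); (3) α·k = A + l; (4) 3·α·n < 2·b·(b−1)²; (5) 3·(A + l)·(b·A + d²) < 2·b·(l·b − d²)·(b−1)². (One may take l = 1, k = 1, n = 1, a = d² + 1, b = d⁴ − 3d² + 3d − 2gd, m = d(a + b − 4) − 2g + 3, α = A + 1.) -/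
private lemma key_ineq (d b : ℤ) (hd : 3 ≤ d) (hb : 2*d^3 ≤ b) :
    3*d^2*b^3 + 3*d^3*b < 2*b*(b-d^2)*(b-1)^2 := by
  have hd0 : 0 < d := by linarith
  have h27 : (27:ℤ) ≤ d^3 := by nlinarith [sq_nonneg (d-3), sq_nonneg d, sq_nonneg (d+3)]
  have hb0 : (54:ℤ) ≤ b := by linarith
  have hd2 : 6*d^2 ≤ b := by nlinarith [mul_nonneg (sq_nonneg d) (by linarith : (0:ℤ) ≤ d - 3)]
  nlinarith [mul_pos (by linarith : (0:ℤ) < b) (by linarith : (0:ℤ) < b),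
    mul_nonneg (mul_nonneg (by linarith : (0:ℤ) ≤ b) (by linarith : (0:ℤ) ≤ b)) (by linarith : (0:ℤ) ≤ b - 6*d^2),
    mul_nonneg (mul_nonneg (by linarith : (0:ℤ) ≤ b - 54) (by linarith : (0:ℤ) ≤ b)) (by linarith : (0:ℤ) ≤ b - d^2),
    mul_pos hd0 (by linarith : (0:ℤ) < b)]

private lemma cond4 (d b A : ℤ) (hd : 3 ≤ d) (hb : 2*d^3 ≤ b) (hA1 : A + 1 ≤ d*b) :
    3 * ((A + 1) * 1) < 2 * b * (b - 1) ^ 2 := by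
  have hd0 : 0 < d := by linarith
  have h27 : (27:ℤ) ≤ d^3 := by nlinarith [sq_nonneg (d-3), sq_nonneg d, sq_nonneg (d+3)]
  have hb0 : (54:ℤ) ≤ b := by linarith
  have hbd : d ≤ b := by nlinarith [sq_nonneg (d-1), sq_nonneg d]
  nlinarith [mul_nonneg (mul_nonneg (by linarith : (0:ℤ) ≤ b) (by linarith : (0:ℤ) ≤ b - 54)) (by linarith : (0:ℤ) ≤ b - 1),
    mul_nonneg (by linarith : (0:ℤ) ≤ b) (by linarith : (0:ℤ) ≤ b - d),
    mul_nonneg (mul_nonneg (by linarith : (0:ℤ) ≤ b) (by linarith : (0:ℤ) ≤ b)) (by linarith : (0:ℤ) ≤ b - d)]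

private lemma cond5 (d b A : ℤ) (hd : 3 ≤ d) (hb : 2*d^3 ≤ b)
    (hA0 : 0 < A) (hA1 : A + 1 ≤ d*b) :
    3 * (A + 1) * (b * A + d ^ 2) < 2 * b * (1 * b - d ^ 2) * (b - 1) ^ 2 := by
  have hd0 : 0 < d := by linarith
  have h27 : (27:ℤ) ≤ d^3 := by nlinarith [sq_nonneg (d-3), sq_nonneg d, sq_nonneg (d+3)]
  have hb0 : (0:ℤ) < b := by linarith
  have hkey := key_ineq d b hd hb
  have hpos : 0 ≤ b * A + d^2 := by positivity
  have hL1 : 3 * (A + 1) * (b * A + d ^ 2) ≤ 3 * (d*b) * (b * A + d ^ 2) := by nlinarith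
  have hL2 : 3 * (d*b) * (b * A + d ^ 2) ≤ 3 * (d*b) * (b * (d*b) + d ^ 2) := by
    have h : A ≤ d*b := by linarith
    nlinarith [mul_nonneg (mul_nonneg (mul_nonneg hd0.le hb0.le) hb0.le) (by linarith : (0:ℤ) ≤ d*b - A)]
  calc 3 * (A + 1) * (b * A + d ^ 2) ≤ 3 * (d*b) * (b * (d*b) + d ^ 2) := le_trans hL1 hL2
    _ = 3*d^2*b^3 + 3*d^3*b := by ring
    _ < 2*b*(b-d^2)*(b-1)^2 := hkey
    _ = 2 * b * (1 * b - d ^ 2) * (b - 1) ^ 2 := by ring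

/-- Remark 3.6 of the paper: for every `(d, g)` with `d ≥ 3`, `g ≥ 0` and
`4g ≤ (d−2)²`, the numerical conditions (1)–(5) of Theorem 3.4 are fulfilled. -/
theorem stmt_14 (d g : ℤ) (hd : 3 ≤ d) (hg : 0 ≤ g)
    (hcast : 4 * g ≤ (d - 2) ^ 2) :
    ∃ a b l m α n k : ℤ,
      0 < a ∧ 0 < b ∧ 0 < l ∧ 0 < m ∧ 0 < α ∧ 0 < n ∧ 0 < k ∧ a ≤ b ∧
      m * d = a * b ∧
      2 * g - 2 + l * (m - 1) = d * (a + b - 4) ∧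
      α * k = (d * (b - 4) - 2 * g + 2) + l ∧
      3 * (α * n) < 2 * b * (b - 1) ^ 2 ∧
      3 * ((d * (b - 4) - 2 * g + 2) + l) * (b * (d * (b - 4) - 2 * g + 2) + d ^ 2)
        < 2 * b * (l * b - d ^ 2) * (b - 1) ^ 2 := by
  have hd0 : 0 < d := by linarith
  refine ⟨d^2 + 1, d^4 - 3*d^2 + 3*d - 2*g*d, 1,
    d*((d^2 + 1) + (d^4 - 3*d^2 + 3*d - 2*g*d) - 4) - 2*g + 3,
    (d*((d^4 - 3*d^2 + 3*d - 2*g*d) - 4) - 2*g + 2) + 1, 1, 1, ?_, ?_, one_pos, ?_, ?_,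
    one_pos, one_pos, ?_, by ring, by ring, by ring, ?_, ?_⟩
  · positivity
  all_goals
    have h1 : 4*g*d ≤ d^3 - 4*d^2 + 4*d := by nlinarith
    have h2 : 4*g ≤ d^2 := by nlinarith
    have hbge : 2*d^3 ≤ d^4 - 3*d^2 + 3*d - 2*g*d := by
      nlinarith [mul_nonneg (sq_nonneg d) (by linarith : (0:ℤ) ≤ d - 3)]
    have h27 : (27:ℤ) ≤ d^3 := by nlinarith [sq_nonneg (d-3), sq_nonneg d, sq_nonneg (d+3)]
    have hA0 : 0 < (d*((d^4 - 3*d^2 + 3*d - 2*g*d) - 4) - 2*g + 2) := by nlinarith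
    have hA1 : (d*((d^4 - 3*d^2 + 3*d - 2*g*d) - 4) - 2*g + 2) + 1
        ≤ d*(d^4 - 3*d^2 + 3*d - 2*g*d) := by nlinarith
  · linarith
  · nlinarith
  · linarith
  · nlinarith [sq_nonneg d]
  · exact cond4 d _ _ hd hbge hA1
  · exact cond5 d _ _ hd hbge hA0 hA1
end
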